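/- Let B₁⁺ := B₁ ∩ {ζ>0} ⊂ ℝ², with coordinates (ζ,y). Let H̃ be a function on the closure of B₁⁺ which vanishes continuously on {ζ=0}. If H̃ ∈ C^{k,α}(closure of B₁⁺) for k ≥ 1 an integer and α ∈ (0,1], then the function (ζ,y) ↦ ζ⁻¹H̃(ζ,y) belongs to C^{k−1,α}(closure of B₁⁺), and ‖ζ⁻¹H̃‖_{C^{k−1,α}} ≤ ‖H̃‖_{C^{k,α}}. -/

import Mathlib

open Metric Set
open scoped Classical

noncomputable section

namespace ThinLemma

def D : Set (EuclideanSpace ℝ (Fin 2)) :=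
  closure (ball (0 : EuclideanSpace ℝ (Fin 2)) 1 ∩ {z | 0 < z 0})

abbrev E2 := EuclideanSpace ℝ (Fin 2)

def e0 : E2 := EuclideanSpace.single 0 1

lemma norm_e0 : ‖e0‖ = 1 := by simp [e0]

def At (t : ℝ) : E2 →L[ℝ] E2 :=
  ContinuousLinearMap.id ℝ E2 + (t - 1) • (EuclideanSpace.proj (0 : Fin 2)).smulRight e0

lemma At_apply_coord (t : ℝ) (z : E2) (j : Fin 2) :
    At t z j = if j = 0 then t * z 0 else z j := by
  have : At t z = z + ((t-1) * z 0) • e0 := by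
    simp [At, ContinuousLinearMap.smulRight_apply, smul_smul]
  rw [this]
  fin_cases j <;> simp [e0, EuclideanSpace.single_apply] <;> ring

lemma At_apply_zero (t : ℝ) (z : E2) : At t z 0 = t * z 0 := by
  simp [At_apply_coord]

lemma At_one (z : E2) : At 1 z = z := by
  ext j
  rw [At_apply_coord]
  split
  · rename_i h; subst h; ring
  · rfl

lemma At_of_zero {z : E2} (hz : z 0 = 0) (t : ℝ) : At t z = z := by
  ext j
  rw [At_apply_coord]
  split
  · rename_i h; subst h; rw [hz]; ring
  · rfl

lemma norm_sq_eq (x : E2) : ‖x‖ ^ 2 = (x 0) ^ 2 + (x 1) ^ 2 := by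
  rw [EuclideanSpace.norm_eq]
  rw [Real.sq_sqrt (by positivity)]
  simp [Fin.sum_univ_two, sq_abs]

lemma norm_At_le {t : ℝ} (ht : t ∈ Icc (0:ℝ) 1) (x : E2) : ‖At t x‖ ≤ ‖x‖ := by
  have h1 : ‖At t x‖ ^ 2 ≤ ‖x‖ ^ 2 := by
    rw [norm_sq_eq, norm_sq_eq]
    have h0 : At t x 0 = t * x 0 := At_apply_zero t x
    have h1' : At t x 1 = x 1 := by rw [At_apply_coord]; simp
    rw [h0, h1']
    have : (t * x 0) ^ 2 ≤ (x 0) ^ 2 := by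
      rw [mul_pow]
      have ht2 : t ^ 2 ≤ 1 := by nlinarith [ht.1, ht.2]
      nlinarith [sq_nonneg (x 0), ht2]
    linarith
  nlinarith [norm_nonneg (At t x), norm_nonneg x]


lemma At_eq (t : ℝ) (z : E2) : At t z = z + ((t-1) * z 0) • e0 := by
  simp [At, ContinuousLinearMap.smulRight_apply, smul_smul]

lemma continuous_At_z (z : E2) : Continuous fun t : ℝ => At t z := by
  simp only [At_eq]
  fun_prop

def Sopen : Set E2 := ball 0 1 ∩ {z | 0 < z 0}

lemma isOpen_Sopen : IsOpen Sopen :=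
  isOpen_ball.inter (isOpen_lt continuous_const (EuclideanSpace.proj (0 : Fin 2)).continuous)

lemma Sopen_subset_D : Sopen ⊆ D := subset_closure

lemma D_eq : D = closedBall 0 1 ∩ {x | 0 ≤ x 0} := by
  apply Subset.antisymm
  · apply closure_minimal
    · exact fun x hx => ⟨ball_subset_closedBall hx.1, (le_of_lt hx.2 : 0 ≤ x 0)⟩
    · exact IsClosed.inter Metric.isClosed_closedBall
        (isClosed_le continuous_const (EuclideanSpace.proj (0 : Fin 2)).continuous)
  · rintro x ⟨hx1, hx2 : 0 ≤ x 0⟩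
    rw [mem_closedBall_zero_iff] at hx1
    set c : E2 := (2⁻¹ : ℝ) • e0 with hc
    have hc0 : c 0 = 2⁻¹ := by simp [hc, e0, EuclideanSpace.single_apply]
    have hcn : ‖c‖ = 2⁻¹ := by
      rw [hc, norm_smul, norm_e0]; norm_num
    have key : ∀ t ∈ Ioo (0:ℝ) 1, (1 - t) • x + t • c ∈ Sopen := by
      intro t ht
      constructor
      · rw [mem_ball_zero_iff]
        calc ‖(1 - t) • x + t • c‖ ≤ ‖(1 - t) • x‖ + ‖t • c‖ := norm_add_le _ _
          _ = |1 - t| * ‖x‖ + |t| * ‖c‖ := by rw [norm_smul, norm_smul]; rfl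
          _ = (1 - t) * ‖x‖ + t * 2⁻¹ := by
              rw [abs_of_nonneg (by linarith [ht.2]), abs_of_nonneg (le_of_lt ht.1), hcn]
          _ < 1 := by nlinarith [ht.1, ht.2, norm_nonneg x]
      · show 0 < ((1 - t) • x + t • c) 0
        have : ((1 - t) • x + t • c) 0 = (1 - t) * x 0 + t * c 0 := rfl
        rw [this, hc0]
        nlinarith [ht.1, ht.2, hx2]
    have hcont : Continuous fun t : ℝ => (1 - t) • x + t • c := by fun_prop
    have : Filter.Tendsto (fun t : ℝ => (1 - t) • x + t • c) (nhdsWithin 0 (Ioi 0)) (nhds x) := by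
      have h0 : (fun t : ℝ => (1 - t) • x + t • c) 0 = x := by simp
      have h2 := hcont.tendsto 0
      rw [show ((1:ℝ) - 0) • x + (0:ℝ) • c = x by simp] at h2
      exact h2.mono_left nhdsWithin_le_nhds
    refine mem_closure_of_tendsto this ?_
    filter_upwards [Ioo_mem_nhdsGT_of_mem (by norm_num : (0:ℝ) ∈ Ico (0:ℝ) 1)] with t ht
    exact key t ht

lemma mem_D_iff {z : E2} : z ∈ D ↔ ‖z‖ ≤ 1 ∧ 0 ≤ z 0 := by
  rw [D_eq]
  simp [mem_closedBall_zero_iff]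

lemma convex_D : Convex ℝ D := by
  rw [D_eq]
  exact (convex_closedBall _ _).inter
    (convex_halfSpace_ge (IsLinearMap.mk (fun x y => rfl) (fun c x => rfl)) 0)

lemma isCompact_D : IsCompact D := by
  rw [D_eq]
  exact (isCompact_closedBall _ _).inter_right
    (isClosed_le continuous_const (EuclideanSpace.proj (0 : Fin 2)).continuous)

lemma c_mem_Sopen : (2⁻¹ : ℝ) • e0 ∈ Sopen := by
  constructor
  · rw [mem_ball_zero_iff, norm_smul, norm_e0]; norm_num
  · show 0 < ((2⁻¹ : ℝ) • e0) 0
    simp [e0, EuclideanSpace.single_apply]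

lemma uniqueDiffOn_D : UniqueDiffOn ℝ D := by
  apply uniqueDiffOn_convex convex_D
  exact ⟨_, (isOpen_Sopen.subset_interior_iff.2 Sopen_subset_D) c_mem_Sopen⟩

lemma D_nonempty : ((2⁻¹ : ℝ) • e0) ∈ D := Sopen_subset_D c_mem_Sopen

lemma At_mem_D {t : ℝ} (ht : t ∈ Icc (0:ℝ) 1) {z : E2} (hz : z ∈ D) : At t z ∈ D := by
  rw [mem_D_iff] at hz ⊢
  refine ⟨le_trans (norm_At_le ht z) hz.1, ?_⟩
  rw [At_apply_zero]
  exact mul_nonneg ht.1 hz.2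

lemma At_mem_Sopen {t : ℝ} (ht : t ∈ Ioo (0:ℝ) 1) {z : E2} (hz : z ∈ D) (h0 : 0 < z 0) :
    At t z ∈ Sopen := by
  rw [mem_D_iff] at hz
  constructor
  · rw [mem_ball_zero_iff]
    have h2 : ‖At t z‖ ^ 2 < ‖z‖ ^ 2 := by
      rw [norm_sq_eq, norm_sq_eq, At_apply_zero]
      have h1' : At t z 1 = z 1 := by rw [At_apply_coord]; simp
      rw [h1']
      have : (t * z 0) ^ 2 < (z 0) ^ 2 := by
        rw [mul_pow]
        have h3 : t ^ 2 < 1 := by nlinarith [ht.1, ht.2]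
        nlinarith [sq_nonneg (z 0), mul_pos h0 h0]
      linarith
    nlinarith [norm_nonneg (At t z), norm_nonneg z, hz.1]
  · show 0 < At t z 0
    rw [At_apply_zero]
    exact mul_pos ht.1 h0

lemma D_mem_nhds {x : E2} (h : x ∈ Sopen) : D ∈ nhds x :=
  mem_nhds_iff.2 ⟨Sopen, Sopen_subset_D, isOpen_Sopen, h⟩


/-! ### The integrand -/

def args (i : ℕ) (t : ℝ) (w : Fin i → E2) : Fin (i+1) → E2 :=
  Fin.snoc (fun j => At t (w j)) e0

def FF (H : E2 → ℝ) (i : ℕ) (z : E2) (w : Fin i → E2) : ℝ :=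
  ∫ t in (0:ℝ)..1, iteratedFDerivWithin ℝ (i+1) H D (At t z) (args i t w)

lemma contOn_G_comp {kk m : ℕ} {H : E2 → ℝ} (hd : ContDiffOn ℝ kk H D) (hm : m ≤ kk)
    {z : E2} (hz : z ∈ D) :
    ContinuousOn (fun t : ℝ => iteratedFDerivWithin ℝ m H D (At t z)) (Icc 0 1) :=
  (hd.continuousOn_iteratedFDerivWithin (by exact_mod_cast hm) uniqueDiffOn_D).comp
    (continuous_At_z z).continuousOn (fun t ht => At_mem_D ht hz)

lemma continuous_args {i : ℕ} (w : Fin i → E2) : Continuous fun t : ℝ => args i t w := by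
  refine continuous_pi fun j => ?_
  refine Fin.lastCases ?_ (fun k => ?_) j
  · simp only [args, Fin.snoc_last]
    exact continuous_const
  · simp only [args, Fin.snoc_castSucc]
    exact continuous_At_z (w k)

lemma contOn_integrand {kk i : ℕ} {H : E2 → ℝ} (hd : ContDiffOn ℝ kk H D) (hik : i + 1 ≤ kk)
    {z : E2} (hz : z ∈ D) (w : Fin i → E2) :
    ContinuousOn (fun t : ℝ => iteratedFDerivWithin ℝ (i+1) H D (At t z) (args i t w))
      (Icc 0 1) := by
  have h1 : ContinuousOn
      (fun t : ℝ => (iteratedFDerivWithin ℝ (i+1) H D (At t z), args i t w)) (Icc 0 1) :=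
    (contOn_G_comp hd hik hz).prodMk (continuous_args w).continuousOn
  exact continuous_eval.comp_continuousOn h1

lemma integrable_integrand {kk i : ℕ} {H : E2 → ℝ} (hd : ContDiffOn ℝ kk H D) (hik : i + 1 ≤ kk)
    {z : E2} (hz : z ∈ D) (w : Fin i → E2) :
    IntervalIntegrable
      (fun t : ℝ => iteratedFDerivWithin ℝ (i+1) H D (At t z) (args i t w))
      MeasureTheory.volume 0 1 := by
  apply ContinuousOn.intervalIntegrable
  rw [uIcc_of_le zero_le_one]
  exact contOn_integrand hd hik hz w

lemma prod_norm_args_le {i : ℕ} {t : ℝ} (ht : t ∈ Icc (0:ℝ) 1) (w : Fin i → E2) :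
    (∏ j, ‖args i t w j‖) ≤ ∏ j, ‖w j‖ := by
  rw [Fin.prod_univ_castSucc]
  simp only [args, Fin.snoc_castSucc, Fin.snoc_last, norm_e0, mul_one]
  exact Finset.prod_le_prod (fun j _ => norm_nonneg _) (fun j _ => norm_At_le ht (w j))

lemma eval_le_of_opNorm_le {i : ℕ} {M : ContinuousMultilinearMap ℝ (fun _ : Fin (i+1) => E2) ℝ}
    {C : ℝ} (hM : ‖M‖ ≤ C) (hC : 0 ≤ C) {t : ℝ} (ht : t ∈ Icc (0:ℝ) 1) (w : Fin i → E2) :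
    ‖M (args i t w)‖ ≤ C * ∏ j, ‖w j‖ := by
  calc ‖M (args i t w)‖ ≤ ‖M‖ * ∏ j, ‖args i t w j‖ := M.le_opNorm _
    _ ≤ C * ∏ j, ‖w j‖ := by
        apply mul_le_mul hM (prod_norm_args_le ht w) (Finset.prod_nonneg fun j _ => norm_nonneg _) hC


lemma comp_update_At {i : ℕ} (t : ℝ) (w : Fin i → E2) [inst : DecidableEq (Fin i)]
    (j : Fin i) (x : E2) :
    (fun k => At t (Function.update w j x k)) = Function.update (fun k => At t (w k)) j (At t x) := by
  funext k
  rcases eq_or_ne k j with rfl | h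
  · simp
  · simp [Function.update_of_ne h]

lemma args_update {i : ℕ} (t : ℝ) (w : Fin i → E2) [inst : DecidableEq (Fin i)]
    (j : Fin i) (x : E2) :
    args i t (Function.update w j x) = Function.update (args i t w) j.castSucc (At t x) := by
  funext k
  refine Fin.lastCases ?_ (fun m => ?_) k
  · rw [Function.update_of_ne (Fin.castSucc_lt_last j).ne']
    simp [args, Fin.snoc_last]
  · rcases eq_or_ne m j with rfl | h
    · simp [args, Fin.snoc_castSucc]
    · rw [Function.update_of_ne (by simpa using h)]
      simp only [args, Fin.snoc_castSucc]
      rw [Function.update_of_ne h]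

lemma FF_bound {kk i : ℕ} {H : E2 → ℝ} {K : ℝ} (hd : ContDiffOn ℝ kk H D)
    (hb : ∀ i ≤ kk, ∀ z ∈ D, ‖iteratedFDerivWithin ℝ i H D z‖ ≤ K)
    (hK : 0 ≤ K) (hik : i + 1 ≤ kk) {z : E2} (hz : z ∈ D) (w : Fin i → E2) :
    ‖FF H i z w‖ ≤ K * ∏ j, ‖w j‖ := by
  have h := intervalIntegral.norm_integral_le_of_norm_le_const
    (C := K * ∏ j, ‖w j‖) (a := (0:ℝ)) (b := 1)
    (f := fun t => iteratedFDerivWithin ℝ (i+1) H D (At t z) (args i t w)) ?_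
  · simpa [FF] using h
  · intro t ht
    rw [uIoc_of_le zero_le_one] at ht
    have ht' : t ∈ Icc (0:ℝ) 1 := ⟨le_of_lt ht.1, ht.2⟩
    exact eval_le_of_opNorm_le (hb (i+1) hik _ (At_mem_D ht' hz)) hK ht' w

def Fp (kk : ℕ) (H : E2 → ℝ) (K : ℝ) (hd : ContDiffOn ℝ kk H D)
    (hb : ∀ i ≤ kk, ∀ z ∈ D, ‖iteratedFDerivWithin ℝ i H D z‖ ≤ K) (hK : 0 ≤ K)
    (z : E2) : FormalMultilinearSeries ℝ E2 ℝ := fun i =>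
  if h : i + 1 ≤ kk ∧ z ∈ D then
    MultilinearMap.mkContinuous
      { toFun := fun w => FF H i z w
        map_update_add' := by
          intro inst w j x y
          unfold FF
          have key : ∀ t : ℝ,
              iteratedFDerivWithin ℝ (i+1) H D (At t z) (args i t (Function.update w j (x + y)))
              = iteratedFDerivWithin ℝ (i+1) H D (At t z) (args i t (Function.update w j x))
              + iteratedFDerivWithin ℝ (i+1) H D (At t z) (args i t (Function.update w j y)) := by
            intro t
            rw [args_update, args_update, args_update, map_add (At t) x y,
              (iteratedFDerivWithin ℝ (i+1) H D (At t z)).map_update_add]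
          simp only [key]
          exact intervalIntegral.integral_add
            (integrable_integrand hd h.1 h.2 _) (integrable_integrand hd h.1 h.2 _)
        map_update_smul' := by
          intro inst w j c x
          unfold FF
          have key : ∀ t : ℝ,
              iteratedFDerivWithin ℝ (i+1) H D (At t z) (args i t (Function.update w j (c • x)))
              = c • iteratedFDerivWithin ℝ (i+1) H D (At t z) (args i t (Function.update w j x)) := by
            intro t
            rw [args_update, args_update, map_smul (At t) c x,
              (iteratedFDerivWithin ℝ (i+1) H D (At t z)).map_update_smul]
          simp only [key]
          exact intervalIntegral.integral_smul c _ }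
      K (fun w => FF_bound hd hb hK h.1 h.2 w)
  else 0

lemma Fp_apply {kk i : ℕ} {H : E2 → ℝ} {K : ℝ} (hd : ContDiffOn ℝ kk H D)
    (hb : ∀ i ≤ kk, ∀ z ∈ D, ‖iteratedFDerivWithin ℝ i H D z‖ ≤ K) (hK : 0 ≤ K)
    (hik : i + 1 ≤ kk) {z : E2} (hz : z ∈ D) (w : Fin i → E2) :
    Fp kk H K hd hb hK z i w = FF H i z w := by
  unfold Fp
  rw [dif_pos ⟨hik, hz⟩]
  rfl

lemma Fp_norm_le {kk i : ℕ} {H : E2 → ℝ} {K : ℝ} (hd : ContDiffOn ℝ kk H D)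
    (hb : ∀ i ≤ kk, ∀ z ∈ D, ‖iteratedFDerivWithin ℝ i H D z‖ ≤ K) (hK : 0 ≤ K)
    (hik : i + 1 ≤ kk) {z : E2} (hz : z ∈ D) :
    ‖Fp kk H K hd hb hK z i‖ ≤ K := by
  unfold Fp
  rw [dif_pos ⟨hik, hz⟩]
  exact MultilinearMap.mkContinuous_norm_le _ hK _


/-! ### Difference bounds, continuity, differentiability of the series -/

lemma Fp_sub_bound {kk i : ℕ} {H : E2 → ℝ} {K : ℝ} (hd : ContDiffOn ℝ kk H D)
    (hb : ∀ i ≤ kk, ∀ z ∈ D, ‖iteratedFDerivWithin ℝ i H D z‖ ≤ K) (hK : 0 ≤ K)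
    (hik : i + 1 ≤ kk) {z z' : E2} (hz : z ∈ D) (hz' : z' ∈ D) {C : ℝ} (hC : 0 ≤ C)
    (h : ∀ t ∈ Icc (0:ℝ) 1, ‖iteratedFDerivWithin ℝ (i+1) H D (At t z)
        - iteratedFDerivWithin ℝ (i+1) H D (At t z')‖ ≤ C) :
    ‖Fp kk H K hd hb hK z i - Fp kk H K hd hb hK z' i‖ ≤ C := by
  apply ContinuousMultilinearMap.opNorm_le_bound hC
  intro w
  rw [ContinuousMultilinearMap.sub_apply, Fp_apply hd hb hK hik hz w,
    Fp_apply hd hb hK hik hz' w]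
  unfold FF
  rw [← intervalIntegral.integral_sub (integrable_integrand hd hik hz w)
    (integrable_integrand hd hik hz' w)]
  have hnorm := intervalIntegral.norm_integral_le_of_norm_le_const
    (C := C * ∏ j, ‖w j‖) (a := (0:ℝ)) (b := 1)
    (f := fun t => iteratedFDerivWithin ℝ (i+1) H D (At t z) (args i t w)
      - iteratedFDerivWithin ℝ (i+1) H D (At t z') (args i t w)) ?_
  · simpa using hnorm
  · intro t ht
    rw [uIoc_of_le zero_le_one] at ht
    have ht' : t ∈ Icc (0:ℝ) 1 := ⟨le_of_lt ht.1, ht.2⟩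
    have heq : iteratedFDerivWithin ℝ (i+1) H D (At t z) (args i t w)
        - iteratedFDerivWithin ℝ (i+1) H D (At t z') (args i t w)
        = (iteratedFDerivWithin ℝ (i+1) H D (At t z)
            - iteratedFDerivWithin ℝ (i+1) H D (At t z')) (args i t w) := by
      simp [ContinuousMultilinearMap.sub_apply]
    rw [heq]
    exact eval_le_of_opNorm_le (h t ht') hC ht' w

lemma Fp_contOn {kk i : ℕ} {H : E2 → ℝ} {K : ℝ} (hd : ContDiffOn ℝ kk H D)
    (hb : ∀ i ≤ kk, ∀ z ∈ D, ‖iteratedFDerivWithin ℝ i H D z‖ ≤ K) (hK : 0 ≤ K)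
    (hik : i + 1 ≤ kk) :
    ContinuousOn (fun z => Fp kk H K hd hb hK z i) D := by
  rw [Metric.continuousOn_iff]
  intro z hz ε hε
  have hUC := isCompact_D.uniformContinuousOn_of_continuous
    (hd.continuousOn_iteratedFDerivWithin (m := i+1) (by exact_mod_cast hik) uniqueDiffOn_D)
  rw [Metric.uniformContinuousOn_iff] at hUC
  obtain ⟨δ, hδ, hdk⟩ := hUC (ε/2) (by linarith)
  refine ⟨δ, hδ, fun z' hz' hdist => ?_⟩
  have hle : dist (Fp kk H K hd hb hK z' i) (Fp kk H K hd hb hK z i) ≤ ε/2 := by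
    rw [dist_eq_norm]
    apply Fp_sub_bound hd hb hK hik hz' hz (by linarith)
    intro t ht
    have h1 : dist (At t z') (At t z) < δ := by
      rw [dist_eq_norm, ← map_sub]
      calc ‖At t (z' - z)‖ ≤ ‖z' - z‖ := norm_At_le ht _
        _ < δ := by rwa [← dist_eq_norm]
    have := hdk _ (At_mem_D ht hz') _ (At_mem_D ht hz) h1
    rw [dist_eq_norm] at this
    exact le_of_lt this
  linarith [hle]

lemma contOn_fderivWithin_iter {kk n : ℕ} {H : E2 → ℝ} (hd : ContDiffOn ℝ kk H D)
    (hn : n + 1 ≤ kk) :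
    ContinuousOn (fderivWithin ℝ (iteratedFDerivWithin ℝ n H D) D) D := by
  have h1 : ContinuousOn (iteratedFDerivWithin ℝ (n+1) H D) D :=
    hd.continuousOn_iteratedFDerivWithin (by exact_mod_cast hn) uniqueDiffOn_D
  rw [iteratedFDerivWithin_succ_eq_comp_left] at h1
  have h2 := ((continuousMultilinearCurryLeftEquiv ℝ
    (fun _ : Fin (n + 1) => E2) ℝ).continuous).comp_continuousOn h1
  simpa [Function.comp_def] using h2

lemma unif_diff {kk n : ℕ} {H : E2 → ℝ} (hd : ContDiffOn ℝ kk H D) (hn : n + 1 ≤ kk)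
    {ε : ℝ} (hε : 0 < ε) :
    ∃ δ > 0, ∀ a ∈ D, ∀ b ∈ D, ‖b - a‖ ≤ δ →
      ‖iteratedFDerivWithin ℝ n H D b - iteratedFDerivWithin ℝ n H D a
        - fderivWithin ℝ (iteratedFDerivWithin ℝ n H D) D a (b - a)‖ ≤ ε * ‖b - a‖ := by
  have hUC := isCompact_D.uniformContinuousOn_of_continuous (contOn_fderivWithin_iter hd hn)
  replace hUC := (Metric.uniformContinuousOn_iff
    (f := fderivWithin ℝ (iteratedFDerivWithin ℝ n H D) D) (s := D)).1 hUC
  obtain ⟨δ, hδ, hkey⟩ := hUC ε hε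
  refine ⟨δ/2, by linarith, fun a ha b hb hab => ?_⟩
  have hdiff : DifferentiableOn ℝ (iteratedFDerivWithin ℝ n H D) D :=
    hd.differentiableOn_iteratedFDerivWithin (by exact_mod_cast hn) uniqueDiffOn_D
  apply Convex.norm_image_sub_le_of_norm_hasFDerivWithin_le'
    (s := D ∩ closedBall a (δ/2))
    (f' := fderivWithin ℝ (iteratedFDerivWithin ℝ n H D) D)
  · intro c hc
    exact ((hdiff c hc.1).hasFDerivWithinAt).mono Set.inter_subset_left
  · intro c hc
    have h1 : dist c a < δ := lt_of_le_of_lt (mem_closedBall.1 hc.2) (by linarith)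
    have h2x := hkey c hc.1 a ha h1
    rw [← dist_eq_norm]
    exact le_of_lt h2x
  · exact convex_D.inter (convex_closedBall _ _)
  · exact ⟨ha, mem_closedBall_self (by linarith)⟩
  · exact ⟨hb, by rwa [mem_closedBall, dist_eq_norm]⟩

lemma args_cons {m : ℕ} (t : ℝ) (v : E2) (w : Fin m → E2) :
    args (m+1) t (Fin.cons v w) = Fin.cons (At t v) (args m t w) := by
  unfold args
  have h1 : (fun j => At t (Fin.cons (α := fun _ => E2) v w j))
      = Fin.cons (α := fun _ => E2) (At t v) (fun j => At t (w j)) := by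
    funext k
    refine Fin.cases ?_ (fun j => ?_) k
    · simp
    · simp
  rw [h1, ← Fin.cons_snoc_eq_snoc_cons]

lemma Fp_hasFDerivWithinAt {kk m : ℕ} {H : E2 → ℝ} {K : ℝ} (hd : ContDiffOn ℝ kk H D)
    (hb : ∀ i ≤ kk, ∀ z ∈ D, ‖iteratedFDerivWithin ℝ i H D z‖ ≤ K) (hK : 0 ≤ K)
    (hm2 : m + 2 ≤ kk) {x : E2} (hx : x ∈ D) :
    HasFDerivWithinAt (fun z => Fp kk H K hd hb hK z m)
      ((Fp kk H K hd hb hK x (m+1)).curryLeft) D x := by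
  have hm1 : m + 1 ≤ kk := by omega
  rw [hasFDerivWithinAt_iff_isLittleO]
  rw [Asymptotics.isLittleO_iff]
  intro c hc
  obtain ⟨δ, hδpos, hkey⟩ := unif_diff hd (n := m+1) hm2 hc
  have h1 : D ∈ nhdsWithin x D := self_mem_nhdsWithin
  have h2 : closedBall x δ ∈ nhdsWithin x D :=
    nhdsWithin_le_nhds (closedBall_mem_nhds x hδpos)
  filter_upwards [h1, h2] with z' hz' hzB
  have hzd : ‖z' - x‖ ≤ δ := by rwa [mem_closedBall, dist_eq_norm] at hzB
  apply ContinuousMultilinearMap.opNorm_le_bound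
    (mul_nonneg (le_of_lt hc) (norm_nonneg (z' - x)))
  intro w
  simp only [ContinuousMultilinearMap.sub_apply, ContinuousMultilinearMap.curryLeft_apply]
  rw [Fp_apply hd hb hK hm1 hz' w, Fp_apply hd hb hK hm1 hx w,
    Fp_apply hd hb hK hm2 hx (Fin.cons (z' - x) w)]
  have e3 : ∀ t : ℝ, iteratedFDerivWithin ℝ (m+1+1) H D (At t x) (args (m+1) t (Fin.cons (z'-x) w))
      = (fderivWithin ℝ (iteratedFDerivWithin ℝ (m+1) H D) D (At t x) (At t (z'-x)))
          (args m t w) := by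
    intro t
    rw [args_cons, iteratedFDerivWithin_succ_apply_left]
    simp
  unfold FF
  rw [← intervalIntegral.integral_sub (integrable_integrand hd hm1 hz' w)
    (integrable_integrand hd hm1 hx w),
    ← intervalIntegral.integral_sub
      ((integrable_integrand hd hm1 hz' w).sub (integrable_integrand hd hm1 hx w))
      (integrable_integrand hd hm2 hx (Fin.cons (z'-x) w))]
  have hnorm := intervalIntegral.norm_integral_le_of_norm_le_const
    (C := c * ‖z' - x‖ * ∏ j, ‖w j‖) (a := (0:ℝ)) (b := 1)
    (f := fun t => iteratedFDerivWithin ℝ (m+1) H D (At t z') (args m t w)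
      - iteratedFDerivWithin ℝ (m+1) H D (At t x) (args m t w)
      - iteratedFDerivWithin ℝ (m+1+1) H D (At t x) (args (m+1) t (Fin.cons (z'-x) w))) ?_
  · simpa using hnorm
  · intro t ht
    rw [uIoc_of_le zero_le_one] at ht
    have ht' : t ∈ Icc (0:ℝ) 1 := ⟨le_of_lt ht.1, ht.2⟩
    rw [e3 t]
    have heq : iteratedFDerivWithin ℝ (m+1) H D (At t z') (args m t w)
        - iteratedFDerivWithin ℝ (m+1) H D (At t x) (args m t w)
        - (fderivWithin ℝ (iteratedFDerivWithin ℝ (m+1) H D) D (At t x) (At t (z'-x)))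
            (args m t w)
        = (iteratedFDerivWithin ℝ (m+1) H D (At t z')
            - iteratedFDerivWithin ℝ (m+1) H D (At t x)
            - fderivWithin ℝ (iteratedFDerivWithin ℝ (m+1) H D) D (At t x) (At t (z'-x)))
            (args m t w) := by
      simp [ContinuousMultilinearMap.sub_apply]
    rw [heq]
    have hsub : At t z' - At t x = At t (z' - x) := (map_sub (At t) z' x).symm
    have hbd : ‖iteratedFDerivWithin ℝ (m+1) H D (At t z')
        - iteratedFDerivWithin ℝ (m+1) H D (At t x)
        - fderivWithin ℝ (iteratedFDerivWithin ℝ (m+1) H D) D (At t x) (At t (z'-x))‖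
        ≤ c * ‖z' - x‖ := by
      have h5 : ‖At t (z' - x)‖ ≤ δ := le_trans (norm_At_le ht' _) hzd
      have := hkey (At t x) (At_mem_D ht' hx) (At t z') (At_mem_D ht' hz')
        (by rw [hsub]; exact h5)
      rw [hsub] at this
      calc _ ≤ c * ‖At t (z' - x)‖ := this
        _ ≤ c * ‖z' - x‖ := by
            exact mul_le_mul_of_nonneg_left (norm_At_le ht' _) (le_of_lt hc)
    exact eval_le_of_opNorm_le hbd (mul_nonneg (le_of_lt hc) (norm_nonneg _)) ht' w


/-! ### The value of the series: FTC -/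

def divZeta (H : EuclideanSpace ℝ (Fin 2) → ℝ) (z : EuclideanSpace ℝ (Fin 2)) : ℝ :=
  if z 0 = 0 then fderivWithin ℝ H D z (EuclideanSpace.single 0 1) else H z / z 0

lemma args_zero_val (t : ℝ) (w : Fin 0 → E2) (j : Fin 1) : args 0 t w j = e0 := by
  simp [args, Fin.snoc]

lemma FF_zero_eq {kk : ℕ} {H : E2 → ℝ} (hkk : 1 ≤ kk) (hd : ContDiffOn ℝ kk H D)
    (hcont : ContinuousOn H D) (hvanish : ∀ z ∈ D, z 0 = 0 → H z = 0)
    {x : E2} (hx : x ∈ D) (w : Fin 0 → E2) :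
    FF H 0 x w = divZeta H x := by
  have hIeq : FF H 0 x w = ∫ t in (0:ℝ)..1, fderivWithin ℝ H D (At t x) e0 := by
    unfold FF
    apply intervalIntegral.integral_congr
    intro t ht
    rw [uIcc_of_le zero_le_one] at ht
    show (iteratedFDerivWithin ℝ 1 H D (At t x)) (args 0 t w) = fderivWithin ℝ H D (At t x) e0
    rw [iteratedFDerivWithin_one_apply (uniqueDiffOn_D _ (At_mem_D ht hx)), args_zero_val]
  rw [hIeq]
  have hx0 : 0 ≤ x 0 := (mem_D_iff.1 hx).2
  rcases eq_or_lt_of_le hx0 with h0 | h0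
  · have h0' : x 0 = 0 := h0.symm
    have hc : ∀ t : ℝ, At t x = x := At_of_zero h0'
    simp only [hc]
    rw [intervalIntegral.integral_const]
    unfold divZeta
    rw [if_pos h0']
    show ((1:ℝ) - 0) • fderivWithin ℝ H D x e0 = _
    simp [e0]
  · have hne : x 0 ≠ 0 := ne_of_gt h0
    have hdiff : DifferentiableOn ℝ H D := hd.differentiableOn (by exact_mod_cast (by omega : kk ≠ 0))
    have hAt : ∀ t : ℝ, HasDerivAt (fun s : ℝ => At s x) ((x 0) • e0) t := by
      intro t
      have heq2 : (fun s : ℝ => At s x) = fun s : ℝ => x + ((s - 1) * x 0) • e0 := by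
        funext s; exact At_eq s x
      rw [heq2]
      have h1 : HasDerivAt (fun s : ℝ => (s - 1) * x 0) (x 0) t := by
        simpa using ((hasDerivAt_id t).sub_const 1).mul_const (x 0)
      have h2 := h1.smul_const e0
      simpa using h2.const_add x
    have hder : ∀ t ∈ Ioo (0:ℝ) 1, HasDerivAt (fun s => H (At s x))
        (x 0 * fderivWithin ℝ H D (At t x) e0) t := by
      intro t ht
      have hmem : At t x ∈ Sopen := At_mem_Sopen ht hx h0
      have hd1 : HasFDerivAt H (fderivWithin ℝ H D (At t x)) (At t x) :=
        ((hdiff _ (Sopen_subset_D hmem)).hasFDerivWithinAt).hasFDerivAt (D_mem_nhds hmem)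
      have h3 := hd1.comp_hasDerivAt t (hAt t)
      simpa [map_smul, smul_eq_mul, Function.comp_def] using h3
    have hcphi : ContinuousOn (fun s : ℝ => H (At s x)) (Icc 0 1) :=
      hcont.comp (continuous_At_z x).continuousOn (fun t ht => At_mem_D ht hx)
    have hpsicont : ContinuousOn (fun t : ℝ => fderivWithin ℝ H D (At t x) e0) (Icc 0 1) := by
      have h1 : ContinuousOn (fun t : ℝ => (iteratedFDerivWithin ℝ 1 H D (At t x),
          (fun _ : Fin 1 => e0))) (Icc 0 1) :=
        (contOn_G_comp hd hkk hx).prodMk continuousOn_const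
      have h2 := continuous_eval.comp_continuousOn h1
      apply h2.congr
      intro t ht
      show fderivWithin ℝ H D (At t x) e0
          = iteratedFDerivWithin ℝ 1 H D (At t x) (fun _ : Fin 1 => e0)
      rw [iteratedFDerivWithin_one_apply (uniqueDiffOn_D _ (At_mem_D ht hx))]
    have hInt : IntervalIntegrable (fun t : ℝ => x 0 * fderivWithin ℝ H D (At t x) e0)
        MeasureTheory.volume 0 1 := by
      apply ContinuousOn.intervalIntegrable
      rw [uIcc_of_le zero_le_one]
      exact continuousOn_const.mul hpsicont
    have hFTC := intervalIntegral.integral_eq_sub_of_hasDeriv_right_of_le zero_le_one hcphi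
      (fun t ht => (hder t ht).hasDerivWithinAt) hInt
    have hv : H (At 0 x) = 0 := by
      apply hvanish _ (At_mem_D (by constructor <;> norm_num) hx)
      rw [At_apply_zero]; ring
    rw [intervalIntegral.integral_const_mul] at hFTC
    have h1At : H (At 1 x) = H x := by rw [At_one]
    rw [h1At, hv, sub_zero] at hFTC
    unfold divZeta
    rw [if_neg hne]
    rw [eq_div_iff hne, mul_comm]
    exact hFTC


def MemHolder (K : ℝ) (j : ℕ) (α : ℝ) (f : EuclideanSpace ℝ (Fin 2) → ℝ) : Prop :=
  ContDiffOn ℝ j f D ∧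
  (∀ i ≤ j, ∀ z ∈ D, ‖iteratedFDerivWithin ℝ i f D z‖ ≤ K) ∧
  (∀ z ∈ D, ∀ w ∈ D,
    ‖iteratedFDerivWithin ℝ j f D z - iteratedFDerivWithin ℝ j f D w‖ ≤ K * ‖z - w‖ ^ α)

/-- **Lemma 6.2.** If `H̃ ∈ C^{k,α}` on the closed half-disk vanishes on `{ζ = 0}`,
then `ζ⁻¹H̃ ∈ C^{k-1,α}` and `‖ζ⁻¹H̃‖_{C^{k-1,α}} ≤ ‖H̃‖_{C^{k,α}}`. -/
theorem div_by_zeta_holder (kk : ℕ) (hkk : 1 ≤ kk) (α : ℝ) (hα : α ∈ Ioc (0:ℝ) 1)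
    (H : EuclideanSpace ℝ (Fin 2) → ℝ) (K : ℝ)
    (hcont : ContinuousOn H D)
    (hvanish : ∀ z ∈ D, z 0 = 0 → H z = 0)
    (hH : MemHolder K kk α H) :
    MemHolder K (kk - 1) α (divZeta H) := by
  obtain ⟨hd, hb, hhold⟩ := hH
  have hK : 0 ≤ K := le_trans (norm_nonneg _) (hb 0 (by omega) _ D_nonempty)
  have hTaylor : HasFTaylorSeriesUpToOn ((kk - 1 : ℕ) : ℕ∞) (divZeta H)
      (fun z => Fp kk H K hd hb hK z) D := by
    refine ⟨?_, ?_, ?_⟩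
    · intro x hx
      show (Fp kk H K hd hb hK x 0).curry0 = divZeta H x
      rw [ContinuousMultilinearMap.curry0_apply]
      rw [show (Fp kk H K hd hb hK x 0) 0 = FF H 0 x 0 from
        Fp_apply hd hb hK (by omega) hx 0]
      exact FF_zero_eq hkk hd hcont hvanish hx _
    · intro m hm x hx
      have hm' : m < kk - 1 := by exact_mod_cast hm
      have hm2 : m + 2 ≤ kk := by omega
      exact Fp_hasFDerivWithinAt hd hb hK hm2 hx
    · intro m hm
      have hm' : m ≤ kk - 1 := by exact_mod_cast hm
      exact Fp_contOn hd hb hK (by omega)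
  have hiter : ∀ i ≤ kk - 1, ∀ z ∈ D, iteratedFDerivWithin ℝ i (divZeta H) D z
      = Fp kk H K hd hb hK z i := fun i hi z hz =>
    (hTaylor.eq_iteratedFDerivWithin_of_uniqueDiffOn (by exact_mod_cast hi)
      uniqueDiffOn_D hz).symm
  refine ⟨?_, ?_, ?_⟩
  · exact_mod_cast hTaylor.contDiffOn
  · intro i hi z hz
    rw [hiter i hi z hz]
    exact Fp_norm_le hd hb hK (by omega) hz
  · intro z hz w hw
    rw [hiter _ le_rfl z hz, hiter _ le_rfl w hw]
    apply Fp_sub_bound hd hb hK (by omega) hz hw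
      (C := K * ‖z - w‖ ^ α)
      (mul_nonneg hK (Real.rpow_nonneg (norm_nonneg _) α))
    intro t ht
    have h1 : (kk - 1) + 1 = kk := by omega
    rw [h1]
    calc ‖iteratedFDerivWithin ℝ kk H D (At t z) - iteratedFDerivWithin ℝ kk H D (At t w)‖
        ≤ K * ‖At t z - At t w‖ ^ α := hhold _ (At_mem_D ht hz) _ (At_mem_D ht hw)
      _ ≤ K * ‖z - w‖ ^ α := by
          apply mul_le_mul_of_nonneg_left _ hK
          apply Real.rpow_le_rpow (norm_nonneg _) _ (le_of_lt hα.1)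
          rw [← map_sub]
          exact norm_At_le ht _

end ThinLemma
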